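/- For every integer n ≥ 2 and every r > 0, (n+2)·P_n(r) − (n−1)·P_{n+1}(r) − 3·P_1(r) < 0. -/

import Mathlib

open Real Filter Set

/-- Modified Bessel function of the first kind of (integer) order `n`. -/
noncomputable def besselI (n : ℕ) (r : ℝ) : ℝ :=
  ∑' k : ℕ, (1 / (k.factorial * Real.Gamma (n + k + 1))) * (r / 2) ^ (n + 2 * k)

/-- `P n r = I_{n+1}(r) / (r * I_n(r))`. -/
noncomputable def P (n : ℕ) (r : ℝ) : ℝ := besselI (n + 1) r / (r * besselI n r)

noncomputable def bTerm (n : ℕ) (r : ℝ) (k : ℕ) : ℝ :=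
  (r / 2) ^ (n + 2 * k) / (k.factorial * (n + k).factorial)

lemma bTerm_nonneg (n : ℕ) {r : ℝ} (hr : 0 ≤ r) (k : ℕ) : 0 ≤ bTerm n r k := by
  unfold bTerm; positivity

lemma summable_bTerm (n : ℕ) (r : ℝ) : Summable (bTerm n r) := by
  have hg : Summable (fun k : ℕ => |r/2| ^ n * ((|r/2|^2) ^ k / k.factorial)) :=
    (Real.summable_pow_div_factorial (|r/2|^2)).mul_left _
  apply Summable.of_norm
  refine hg.of_nonneg_of_le (fun k => norm_nonneg _) (fun k => ?_)
  have h1 : ‖bTerm n r k‖ = |r/2| ^ (n + 2*k) / ((k.factorial : ℝ) * (n + k).factorial) := by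
    unfold bTerm
    rw [Real.norm_eq_abs, abs_div, abs_pow, abs_of_pos (show (0:ℝ) < (k.factorial : ℝ) * (n + k).factorial by positivity)]
  have hk : (1:ℝ) ≤ (n+k).factorial := by
    exact_mod_cast Nat.one_le_iff_ne_zero.2 (Nat.factorial_ne_zero _)
  have hkf : (0:ℝ) < k.factorial := by exact_mod_cast Nat.factorial_pos k
  rw [h1, pow_add, pow_mul]
  rw [div_le_iff₀ (by positivity)]
  have e : |r/2| ^ n * ((|r/2|^2) ^ k / k.factorial) * ((k.factorial : ℝ) * (n+k).factorial)
      = |r/2| ^ n * (|r/2|^2) ^ k * (n+k).factorial := by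
    field_simp
  rw [e]
  nlinarith [pow_nonneg (abs_nonneg (r/2)) n, pow_nonneg (pow_nonneg (abs_nonneg (r/2)) 2) k,
    mul_nonneg (pow_nonneg (abs_nonneg (r/2)) n) (pow_nonneg (pow_nonneg (abs_nonneg (r/2)) 2) k)]

lemma besselI_eq (n : ℕ) (r : ℝ) : besselI n r = ∑' k, bTerm n r k := by
  unfold besselI bTerm
  congr 1; funext k
  have : Real.Gamma ((n:ℝ) + k + 1) = (n + k).factorial := by
    rw [show ((n:ℝ) + k + 1) = ((n + k : ℕ) : ℝ) + 1 by push_cast; ring,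
      Real.Gamma_nat_eq_factorial]
  rw [this, one_div, inv_mul_eq_div]

lemma besselI_pos (n : ℕ) {r : ℝ} (hr : 0 < r) : 0 < besselI n r := by
  rw [besselI_eq]
  apply Summable.tsum_pos (summable_bTerm n r) (bTerm_nonneg n hr.le) 0
  unfold bTerm; positivity

lemma besselIS (n : ℕ) (r : ℝ) : besselI n r = ∑' k, bTerm n r k := besselI_eq n r

lemma besselI_recur (n : ℕ) (r : ℝ) :
    r * besselI n r = 2*((n:ℝ)+1) * besselI (n+1) r + r * besselI (n+2) r := by
  set w : ℕ → ℝ := fun m => 2*(m:ℝ)*(r/2)^(n+1+2*m)/(m.factorial*(n+1+m).factorial) with hw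
  have hshift : ∀ k : ℕ, w (k+1) = r * bTerm (n+2) r k := by
    intro k
    have e1 : ((k+1).factorial : ℝ) = (k+1) * k.factorial := by
      rw [Nat.factorial_succ]; push_cast; ring
    have e2 : (n+1+(k+1)) = (n+2+k) := by omega
    have e3 : n+1+2*(k+1) = (n+2+2*k)+1 := by omega
    simp only [hw, bTerm, e1, e2, e3, pow_succ]
    have : ((k.factorial : ℝ)) ≠ 0 := by positivity
    have : (((n+2+k).factorial : ℝ)) ≠ 0 := by positivity
    field_simp
    push_cast
    ring
  have hsw : Summable w := by
    rw [← summable_nat_add_iff 1]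
    exact (funext hshift : (fun k => w (k+1)) = _) ▸ (summable_bTerm (n+2) r).mul_left r
  have hterm : ∀ m : ℕ, r * bTerm n r m = 2*((n:ℝ)+1) * bTerm (n+1) r m + w m := by
    intro m
    have e2 : (n+1+m) = (n+m)+1 := by omega
    have e1 : ((n+1+m).factorial : ℝ) = ((n+m)+1) * (n+m).factorial := by
      rw [e2, Nat.factorial_succ]; push_cast; ring
    have e3 : n+2*m+1 = n+1+2*m := by omega
    simp only [bTerm, hw]
    rw [show n+(2:ℕ)*m = (n+2*m) by rfl]
    have h4 : r * ((r/2)^(n+2*m)) = 2 * (r/2)^(n+1+2*m) := by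
      rw [show n+1+2*m = (n+2*m)+1 by omega, pow_succ]; ring
    have f1 : ((m.factorial : ℝ)) ≠ 0 := by positivity
    have f2 : (((n+m).factorial : ℝ)) ≠ 0 := by positivity
    rw [mul_comm r, div_mul_eq_mul_div, mul_comm _ r, h4, e1]
    field_simp
    ring
  calc r * besselI n r = ∑' m, r * bTerm n r m := by
        rw [besselIS, tsum_mul_left]
    _ = ∑' m, (2*((n:ℝ)+1) * bTerm (n+1) r m + w m) := tsum_congr hterm
    _ = 2*((n:ℝ)+1) * besselI (n+1) r + ∑' m, w m := by
        rw [Summable.tsum_add ((summable_bTerm (n+1) r).mul_left _) hsw, besselIS, tsum_mul_left]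
    _ = 2*((n:ℝ)+1) * besselI (n+1) r + r * besselI (n+2) r := by
        congr 1
        rw [Summable.tsum_eq_zero_add hsw]
        have h0 : w 0 = 0 := by simp [hw]
        rw [h0, zero_add, tsum_congr hshift, tsum_mul_left, besselIS]

/-- coefficient term of the product series -/
noncomputable def pTerm (μ ν : ℕ) (r : ℝ) (k : ℕ) : ℝ :=
  ((μ+ν+2*k).choose k : ℝ) / ((μ+k).factorial * (ν+k).factorial) * (r/2)^(μ+ν+2*k)

lemma antidiag_eval (μ ν k : ℕ) (r : ℝ) :
    ∑ ij ∈ Finset.HasAntidiagonal.antidiagonal k, bTerm μ r ij.1 * bTerm ν r ij.2 = pTerm μ ν r k := by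
  have hterm : ∀ ij ∈ Finset.HasAntidiagonal.antidiagonal k, bTerm μ r ij.1 * bTerm ν r ij.2
      = (r/2)^(μ+ν+2*k) / ((μ+k).factorial * (ν+k).factorial)
        * (((ν+k).choose ij.1 : ℝ) * ((μ+k).choose ij.2)) := by
    rintro ⟨i, j⟩ hij
    rw [Finset.HasAntidiagonal.mem_antidiagonal] at hij
    simp only at hij ⊢
    have hi : i ≤ ν + k := by omega
    have hj : j ≤ μ + k := by omega
    rw [Nat.cast_choose ℝ hi, Nat.cast_choose ℝ hj]
    have e1 : ν + k - i = ν + j := by omega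
    have e2 : μ + k - j = μ + i := by omega
    rw [e1, e2]
    unfold bTerm
    have epow : (r/2)^(μ+2*i) * (r/2)^(ν+2*j) = (r/2)^(μ+ν+2*k) := by
      rw [← pow_add]; congr 1; omega
    have f1 : ((i.factorial : ℝ)) ≠ 0 := by positivity
    have f2 : ((j.factorial : ℝ)) ≠ 0 := by positivity
    have f3 : (((μ+i).factorial : ℝ)) ≠ 0 := by positivity
    have f4 : (((ν+j).factorial : ℝ)) ≠ 0 := by positivity
    have f5 : (((μ+k).factorial : ℝ)) ≠ 0 := by positivity
    have f6 : (((ν+k).factorial : ℝ)) ≠ 0 := by positivity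
    have er : r^(μ+2*i) * r^(ν+2*j) = r^(μ+ν+2*k) := by rw [← pow_add]; congr 1; omega
    have e2' : (2:ℝ)^(μ+2*i) * 2^(ν+2*j) = 2^(μ+ν+2*k) := by rw [← pow_add]; congr 1; omega
    field_simp
    exact epow
  rw [Finset.sum_congr rfl hterm, ← Finset.mul_sum]
  have hv : ∑ ij ∈ Finset.HasAntidiagonal.antidiagonal k, (((ν+k).choose ij.1 : ℝ) * ((μ+k).choose ij.2))
      = ((μ+ν+2*k).choose k : ℝ) := by
    have := Nat.add_choose_eq (ν+k) (μ+k) k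
    have e : ν + k + (μ + k) = μ+ν+2*k := by omega
    rw [e] at this
    rw [this]
    push_cast
    ring
  rw [hv, pTerm]
  ring

lemma summable_norm_bTerm (n : ℕ) (r : ℝ) : Summable (fun k => ‖bTerm n r k‖) := by
  have : (fun k => ‖bTerm n r k‖) = bTerm n |r| := by
    funext k
    unfold bTerm
    rw [Real.norm_eq_abs, abs_div, abs_pow, abs_div, abs_of_pos (show (0:ℝ) < 2 by norm_num),
      abs_of_pos (show (0:ℝ) < (k.factorial : ℝ) * (n+k).factorial by positivity)]
  rw [this]; exact summable_bTerm n |r|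

lemma besselI_mul (μ ν : ℕ) (r : ℝ) :
    besselI μ r * besselI ν r = ∑' k, pTerm μ ν r k := by
  simp only [besselIS]
  rw [tsum_mul_tsum_eq_tsum_sum_antidiagonal_of_summable_norm
    (summable_norm_bTerm μ r) (summable_norm_bTerm ν r)]
  exact tsum_congr (fun k => antidiag_eval μ ν k r)

lemma summable_pTerm (μ ν : ℕ) (r : ℝ) : Summable (pTerm μ ν r) := by
  have h := summable_norm_sum_mul_antidiagonal_of_summable_norm
    (summable_norm_bTerm μ r) (summable_norm_bTerm ν r)
  have h2 := h.of_norm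
  have e : (fun n => ∑ kl ∈ Finset.HasAntidiagonal.antidiagonal n, bTerm μ r kl.1 * bTerm ν r kl.2)
      = pTerm μ ν r := funext (fun k => antidiag_eval μ ν k r)
  rwa [e] at h2

/-- Key coefficient inequality, real-cast version. -/
lemma chooseKey (ν j : ℕ) :
    (2*(ν:ℝ)+1) * ((2*ν+2*(j+1)+1).choose (j+1) : ℝ) + 2*((ν:ℝ)+(j+1)+1) * ((2*ν+2*(j+1)).choose j : ℝ)
      ≤ 2*((ν:ℝ)+(j+1)+1) * ((2*ν+2*(j+1)).choose (j+1) : ℝ) := by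
  have hp : (2*ν+2*(j+1)+1).choose (j+1) = (2*ν+2*(j+1)).choose j + (2*ν+2*(j+1)).choose (j+1) := by
    have := Nat.choose_succ_succ (2*ν+2*(j+1)) j
    simpa using this
  have hrel : (2*ν+2*(j+1)).choose (j+1) * (j+1) = (2*ν+2*(j+1)).choose j * (2*ν+j+2) := by
    have := Nat.choose_succ_right_eq (2*ν+2*(j+1)) j
    have e : 2*ν+2*(j+1) - j = 2*ν+j+2 := by omega
    rwa [e] at this
  set a := (2*ν+2*(j+1)).choose (j+1)
  set b := (2*ν+2*(j+1)).choose j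
  have hrelR : (a:ℝ) * (j+1) = (b:ℝ) * (2*ν+j+2) := by exact_mod_cast congrArg (Nat.cast (R:=ℝ)) hrel
  have hb : (0:ℝ) ≤ b := Nat.cast_nonneg b
  have hpR : ((2*ν+2*(j+1)+1).choose (j+1) : ℝ) = (b:ℝ) + (a:ℝ) := by exact_mod_cast congrArg (Nat.cast (R:=ℝ)) hp
  rw [hpR]
  nlinarith [hrelR, hb, mul_le_mul_of_nonneg_left
    (show (4*(ν:ℝ)+2*j+5) * (j+1) ≤ (2*(j:ℝ)+3) * (2*ν+j+2) by nlinarith [Nat.cast_nonneg (α := ℝ) ν, Nat.cast_nonneg (α := ℝ) j]) hb]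

lemma keyA (ν : ℕ) {r : ℝ} (hr : 0 < r) :
    (2*(ν:ℝ)+1) * (besselI ν r * besselI (ν+1) r) + r * (besselI (ν+1) r * besselI (ν+1) r)
      < r * (besselI ν r * besselI ν r) := by
  set v : ℕ → ℝ := fun k => if k = 0 then 0 else
    2 * ((2*ν+2*k).choose (k-1) : ℝ) / (((ν+k).factorial : ℝ) * ((ν+k).factorial : ℝ)) * (r/2)^(2*ν+1+2*k)
    with hvdef
  have hshift : ∀ k : ℕ, v (k+1) = r * pTerm (ν+1) (ν+1) r k := by
    intro k
    have e1 : (ν+1)+(ν+1)+2*k = 2*ν+2*(k+1) := by omega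
    have e2 : ν+(k+1) = (ν+1)+k := by omega
    have e3 : 2*ν+1+2*(k+1) = ((ν+1)+(ν+1)+2*k)+1 := by omega
    simp only [hvdef, pTerm, if_neg (Nat.succ_ne_zero k), Nat.add_sub_cancel, e2, e3, ← e1, pow_succ]
    field_simp
  have hsv : Summable v := by
    rw [← summable_nat_add_iff 1]
    have : (fun k => v (k+1)) = fun k => r * pTerm (ν+1) (ν+1) r k := funext hshift
    rw [this]
    exact (summable_pTerm (ν+1) (ν+1) r).mul_left r
  have hv0 : v 0 = 0 := by simp [hvdef]
  have hvsum : ∑' k, v k = r * (besselI (ν+1) r * besselI (ν+1) r) := by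
    rw [Summable.tsum_eq_zero_add hsv, hv0, zero_add, tsum_congr hshift, tsum_mul_left,
      besselI_mul]
  set F : ℕ → ℝ := fun k => (2*(ν:ℝ)+1) * pTerm ν (ν+1) r k + v k with hFdef
  set G : ℕ → ℝ := fun k => r * pTerm ν ν r k with hGdef
  have hsF : Summable F := ((summable_pTerm ν (ν+1) r).mul_left _).add hsv
  have hsG : Summable G := (summable_pTerm ν ν r).mul_left r
  have ht : (0:ℝ) < r/2 := by linarith
  have hF0' : G 0 - F 0 = (r/2)^(2*ν+1) / ((ν.factorial:ℝ) * (((ν:ℝ)+1) * ν.factorial)) := by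
    simp only [hFdef, hGdef, hv0, pTerm, add_zero]
    have e1 : ν+(ν+1)+2*0 = 2*ν+1 := by omega
    have e2 : ν+ν+2*0 = 2*ν := by omega
    rw [e1, e2]
    simp only [Nat.choose_zero_right, Nat.add_zero]
    have h2 : (((ν+1)).factorial : ℝ) = ((ν:ℝ)+1) * ν.factorial := by
      rw [Nat.factorial_succ]; push_cast; ring
    rw [h2, pow_succ]
    have hf : ((ν.factorial:ℝ)) ≠ 0 := by positivity
    field_simp
    ring
  have hF0 : F 0 < G 0 := by
    rw [← sub_pos, hF0']
    positivity
  have hFG : ∀ k, F k ≤ G k := by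
    intro k
    cases k with
    | zero => exact hF0.le
    | succ j =>
      rw [← sub_nonneg]
      simp only [hFdef, hGdef, pTerm, if_neg (Nat.succ_ne_zero j), hvdef, Nat.add_sub_cancel]
      have e1 : ν+(ν+1)+2*(j+1) = 2*ν+2*(j+1)+1 := by omega
      have e2 : ν+ν+2*(j+1) = 2*ν+2*(j+1) := by omega
      have e3 : (ν+1)+(j+1) = (ν+(j+1))+1 := by omega
      have e4 : 2*ν+1+2*(j+1) = (2*ν+2*(j+1))+1 := by omega
      rw [e1, e2, e3, e4]
      set m := ν+(j+1) with hm
      have hfac : ((m+1).factorial : ℝ) = ((m:ℝ)+1) * (m.factorial : ℝ) := by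
        rw [Nat.factorial_succ]; push_cast; ring
      have hkey := chooseKey ν j
      have hcast : ((ν:ℝ)+((j:ℝ)+1)+1) = (m:ℝ)+1 := by rw [hm]; push_cast; ring
      rw [hcast] at hkey
      set a := ((2*ν+2*(j+1)).choose (j+1) : ℝ)
      set b := ((2*ν+2*(j+1)).choose j : ℝ)
      set c := ((2*ν+2*(j+1)+1).choose (j+1) : ℝ)
      have hmf : ((m.factorial:ℝ)) ≠ 0 := by positivity
      have hm1 : ((m:ℝ)+1) ≠ 0 := by positivity
      have heq2 : r * (a / ((m.factorial:ℝ) * (m.factorial:ℝ)) * (r/2)^(2*ν+2*(j+1))) -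
          ((2*(ν:ℝ)+1) * (c / ((m.factorial:ℝ) * (((m:ℝ)+1) * (m.factorial:ℝ))) * (r/2)^((2*ν+2*(j+1))+1))
            + 2 * b / ((m.factorial:ℝ) * (m.factorial:ℝ)) * (r/2)^((2*ν+2*(j+1))+1))
          = (2*((m:ℝ)+1)*a - ((2*(ν:ℝ)+1)*c + 2*((m:ℝ)+1)*b)) * (r/2)^((2*ν+2*(j+1))+1)
             / (((m:ℝ)+1) * ((m.factorial:ℝ) * (m.factorial:ℝ))) := by
        rw [pow_succ]
        have hr' : r ≠ 0 := ne_of_gt hr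
        field_simp
      rw [hfac, heq2]
      apply div_nonneg _ (by positivity)
      apply mul_nonneg _ (by positivity)
      linarith [hkey]
  calc (2*(ν:ℝ)+1) * (besselI ν r * besselI (ν+1) r) + r * (besselI (ν+1) r * besselI (ν+1) r)
      = ∑' k, F k := by
        rw [hFdef, Summable.tsum_add ((summable_pTerm ν (ν+1) r).mul_left _) hsv, tsum_mul_left,
          besselI_mul, hvsum]
    _ < ∑' k, G k := Summable.tsum_lt_tsum hFG hF0 hsF hsG
    _ = r * (besselI ν r * besselI ν r) := by rw [hGdef, tsum_mul_left, besselI_mul]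

lemma upperU (ν : ℕ) {r : ℝ} (hr : 0 < r) :
    P ν r < 1/(((ν:ℝ)+1/2) + Real.sqrt (((ν:ℝ)+1/2)^2+r^2)) := by
  have hI0 := besselI_pos ν hr
  have hI1 := besselI_pos (ν+1) hr
  have hkey := keyA ν hr
  set s := Real.sqrt (((ν:ℝ)+1/2)^2+r^2) with hs
  have hs2 : s^2 = ((ν:ℝ)+1/2)^2+r^2 := Real.sq_sqrt (by positivity)
  have hs0 : 0 < s := Real.sqrt_pos.2 (by positivity)
  have hsge : (ν:ℝ)+1/2 < s := by nlinarith
  rw [P, div_lt_div_iff₀ (by positivity) (by positivity)]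
  have h2 : 0 < r * besselI ν r + (s - ((ν:ℝ)+1/2)) * besselI (ν+1) r := by
    have := mul_pos (sub_pos.2 hsge) hI1
    nlinarith [mul_pos hr hI0]
  nlinarith [hkey, h2, mul_pos hr hI0, mul_pos (mul_pos hr hI0) h2]

lemma lowerL (ν : ℕ) {r : ℝ} (hr : 0 < r) :
    1/(((ν:ℝ)+1/2) + Real.sqrt (((ν:ℝ)+3/2)^2+r^2)) < P ν r := by
  have hI0 := besselI_pos ν hr
  have hI1 := besselI_pos (ν+1) hr
  have hI2 := besselI_pos (ν+2) hr
  set s := Real.sqrt (((ν:ℝ)+3/2)^2+r^2) with hs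
  have hs2 : s^2 = ((ν:ℝ)+3/2)^2+r^2 := Real.sq_sqrt (by positivity)
  have hs0 : 0 < s := Real.sqrt_pos.2 (by positivity)
  have hsge : (ν:ℝ)+3/2 < s := by nlinarith
  have hU := upperU (ν+1) hr
  have hcast : ((ν+1:ℕ):ℝ)+1/2 = (ν:ℝ)+3/2 := by push_cast; ring
  rw [hcast] at hU
  rw [P, div_lt_div_iff₀ (by positivity) (by positivity)] at hU
  -- hU : besselI (ν+2) r * (ν+3/2+s) < 1 * (r * besselI (ν+1) r)  (check shape)
  have hrec := besselI_recur ν r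
  have hstep : r * besselI (ν+2) r < (s - ((ν:ℝ)+3/2)) * besselI (ν+1) r := by
    have hd : 0 < ((ν:ℝ)+3/2) + s := by positivity
    have h3 : r * (besselI (ν+2) r * (((ν:ℝ)+3/2) + s)) < r * (r * besselI (ν+1) r) := by
      apply mul_lt_mul_of_pos_left _ hr
      · calc besselI (ν+2) r * (((ν:ℝ)+3/2) + s) < 1 * (r * besselI (ν+1) r) := hU
          _ = r * besselI (ν+1) r := by ring
    have h4 : r^2 = (s - ((ν:ℝ)+3/2)) * (s + ((ν:ℝ)+3/2)) := by nlinarith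
    nlinarith [h3, h4, mul_pos hr hI2]
  rw [P, div_lt_div_iff₀ (by positivity) (by positivity)]
  nlinarith [hstep, hrec, mul_pos hr hI1]


lemma final_ineq (x r a b c : ℝ) (hx : 2 ≤ x) (hr : 0 < r)
    (ha : a^2 = (x+1/2)^2 + r^2) (hb : b^2 = (x+5/2)^2 + r^2) (hc : c^2 = 25/4 + r^2)
    (ha0 : 0 < a) (hb0 : 0 < b) (hc0 : 0 < c) :
    (x+2)*(x+3/2+b)*(3/2+c) < (x+1/2+a)*((x-1)*(3/2+c)+3*(x+3/2+b)) := by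
  have hax : x+1/2 < a := by
    have h1 : (x+1/2)^2 < a^2 := by nlinarith
    exact lt_of_pow_lt_pow_left₀ 2 ha0.le h1
  have hca : c ≤ a := by
    have h1 : c^2 ≤ a^2 := by nlinarith
    exact le_of_pow_le_pow_left₀ (by norm_num) ha0.le h1
  have hcb : c < b := by
    have h1 : c^2 < b^2 := by nlinarith
    exact lt_of_pow_lt_pow_left₀ 2 hb0.le h1
  have hba2 : b - a < 2 := by
    have h1 : b^2 < (a+2)^2 := by nlinarith
    have h2 : b < a+2 := lt_of_pow_lt_pow_left₀ 2 (by linarith) h1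
    linarith
  have key : (x-1)*((1+(b-a))*(3/2+c)) < 3*(((x-1)+(a-c))*(x+3/2+b)) := by
    have s1 : (x-1)*(1+(b-a)) < 3*(x-1) := by nlinarith
    have s2 : (0:ℝ) < 3/2+c := by linarith
    have s3 : 3/2+c ≤ x+3/2+b := by linarith
    calc (x-1)*((1+(b-a))*(3/2+c)) = ((x-1)*(1+(b-a)))*(3/2+c) := by ring
      _ < (3*(x-1))*(3/2+c) := mul_lt_mul_of_pos_right s1 s2
      _ ≤ (3*(x-1))*(x+3/2+b) := mul_le_mul_of_nonneg_left s3 (by linarith)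
      _ ≤ 3*(((x-1)+(a-c))*(x+3/2+b)) := by nlinarith [mul_nonneg (sub_nonneg.2 hca) (show (0:ℝ) ≤ x+3/2+b by linarith)]
  nlinarith [key]

set_option maxHeartbeats 1000000 in
theorem P_inequality (n : ℕ) (hn : 2 ≤ n) (r : ℝ) (hr : 0 < r) :
    ((n : ℝ) + 2) * P n r - ((n : ℝ) - 1) * P (n + 1) r - 3 * P 1 r < 0 := by
  set x := (n:ℝ) with hxdef
  have hx : (2:ℝ) ≤ x := by rw [hxdef]; exact_mod_cast hn
  set a := Real.sqrt ((x+1/2)^2+r^2) with hadef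
  set b := Real.sqrt ((x+5/2)^2+r^2) with hbdef
  set c := Real.sqrt (25/4+r^2) with hcdef
  have ha : a^2 = (x+1/2)^2+r^2 := Real.sq_sqrt (by positivity)
  have hb : b^2 = (x+5/2)^2+r^2 := Real.sq_sqrt (by positivity)
  have hc : c^2 = 25/4+r^2 := Real.sq_sqrt (by positivity)
  have ha0 : 0 < a := Real.sqrt_pos.2 (by positivity)
  have hb0 : 0 < b := Real.sqrt_pos.2 (by positivity)
  have hc0 : 0 < c := Real.sqrt_pos.2 (by positivity)
  have hU : P n r < 1/(x+1/2+a) := upperU n hr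
  have hLn : 1/(x+3/2+b) < P (n+1) r := by
    have h := lowerL (n+1) hr
    have e1 : ((n+1:ℕ):ℝ)+1/2 = x+3/2 := by rw [hxdef]; push_cast; ring
    have e2 : (((n+1:ℕ):ℝ)+3/2)^2 = (x+5/2)^2 := by rw [hxdef]; push_cast; ring
    rw [e1, e2] at h
    exact h
  have hL1 : 1/(3/2+c) < P 1 r := by
    have h := lowerL 1 hr
    have e1 : ((1:ℕ):ℝ)+1/2 = 3/2 := by norm_num
    have e2 : (((1:ℕ):ℝ)+3/2)^2+r^2 = 25/4+r^2 := by norm_num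
    rw [e1, e2] at h
    exact h
  have hA : 0 < x+1/2+a := by positivity
  have hB : 0 < x+3/2+b := by positivity
  have hC : 0 < (3:ℝ)/2+c := by positivity
  have hkey := final_ineq x r a b c hx hr ha hb hc ha0 hb0 hc0
  have step1 : (x+2) * P n r - (x-1) * P (n+1) r - 3 * P 1 r
      < (x+2)*(1/(x+1/2+a)) - (x-1)*(1/(x+3/2+b)) - 3*(1/(3/2+c)) := by
    have b1 := mul_lt_mul_of_pos_left hU (show (0:ℝ) < x+2 by linarith)
    have b2 := mul_lt_mul_of_pos_left hLn (show (0:ℝ) < x-1 by linarith)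
    have b3 := mul_lt_mul_of_pos_left hL1 (show (0:ℝ) < 3 by norm_num)
    linarith
  have hfrac : (x+2)/(x+1/2+a) < (x-1)/(x+3/2+b) + 3/(3/2+c) := by
    rw [div_add_div _ _ (ne_of_gt hB) (ne_of_gt hC), div_lt_div_iff₀ hA (mul_pos hB hC)]
    nlinarith [hkey]
  have step2 : (x+2)*(1/(x+1/2+a)) - (x-1)*(1/(x+3/2+b)) - 3*(1/(3/2+c)) < 0 := by
    rw [mul_one_div, mul_one_div, mul_one_div]
    linarith
  have e3 : ((n:ℝ)+2) = x+2 := by rw [hxdef]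
  have e4 : ((n:ℝ)-1) = x-1 := by rw [hxdef]
  rw [e3, e4]
  linarith
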